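/- For every n ≥ 1, applying the adjoint action of the operator [Δ′, p_1] = Σ_{j≥1} j p_{j+1} ∂/∂p_j iterated (n−1) times to the multiplication operator p_1 yields (n−1)! times the multiplication operator p_n; that is, ad([Δ′, p_1])^{n−1}(p_1) = (n−1)! p_n as operators on P. -/

import Mathlib

noncomputable section

open MvPolynomial

/-- Goulden's operator `Δ′ = (1/2) Σ_{i,j≥1} i j p_{i+j} ∂/∂p_i ∂/∂p_j`
on `P = ℚ[p_1, p_2, …]`, where `p_i := X i`. -/
def Delta' (f : MvPolynomial ℕ ℚ) : MvPolynomial ℕ ℚ :=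
  (1 / 2 : ℚ) • ∑ᶠ (i : ℕ) (j : ℕ),
    ((i : ℚ) * (j : ℚ)) • (X (i + j) * pderiv i (pderiv j f))

/-- The commutator `[A, B] = A ∘ B - B ∘ A` of two operators on `P`. -/
def opComm (A B : MvPolynomial ℕ ℚ → MvPolynomial ℕ ℚ) :
    MvPolynomial ℕ ℚ → MvPolynomial ℕ ℚ :=
  fun f => A (B f) - B (A f)

/-- The operator of multiplication by the variable `p_m`. -/
def mulP (m : ℕ) : MvPolynomial ℕ ℚ → MvPolynomial ℕ ℚ := fun f => X m * f

lemma vars_pderiv (j : ℕ) (f : MvPolynomial ℕ ℚ) : (pderiv j f).vars ⊆ f.vars := by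
  classical
  intro i hi
  conv at hi => rw [f.as_sum, map_sum]
  have := MvPolynomial.vars_sum_subset (f.support) (fun s => pderiv j (monomial s (coeff s f))) hi
  rw [Finset.mem_biUnion] at this
  obtain ⟨s, hs, hi⟩ := this
  simp only [pderiv_monomial] at hi
  have h1 : ((monomial (s - Finsupp.single j 1)) (coeff s f * (s j : ℚ))).vars
      ⊆ (s - Finsupp.single j 1).support := by
    by_cases h : (coeff s f * (s j : ℚ)) = 0
    · simp [h]
    · rw [vars_monomial h]
  have h2 : i ∈ s.support := Finsupp.support_tsub (h1 hi)
  rw [mem_vars]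
  exact ⟨s, hs, h2⟩

lemma Delta'_eq_sum (g : MvPolynomial ℕ ℚ) (T : Finset ℕ) (hT : g.vars ⊆ T) :
    Delta' g = (1 / 2 : ℚ) • ∑ i ∈ T, ∑ j ∈ T,
      ((i : ℚ) * (j : ℚ)) • (X (i + j) * pderiv i (pderiv j g)) := by
  rw [Delta']
  congr 1
  have hinner : ∀ i : ℕ, (∑ᶠ j : ℕ, ((i : ℚ) * (j : ℚ)) • (X (i + j) * pderiv i (pderiv j g)))
      = ∑ j ∈ T, ((i : ℚ) * (j : ℚ)) • (X (i + j) * pderiv i (pderiv j g)) := by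
    intro i
    apply finsum_eq_sum_of_support_subset
    intro j hj
    by_contra hjT
    have hz : pderiv j g = 0 := pderiv_eq_zero_of_notMem_vars (fun h => hjT (hT h))
    simp [Function.mem_support, hz] at hj
  rw [finsum_congr hinner]
  apply finsum_eq_sum_of_support_subset
  intro i hi
  by_contra hiT
  have hz : ∀ j : ℕ, pderiv i (pderiv j g) = 0 := by
    intro j
    apply pderiv_eq_zero_of_notMem_vars
    exact fun h => hiT (hT (vars_pderiv j g h))
  simp [Function.mem_support, hz] at hi

lemma support_term_subset (m : ℕ) (f : MvPolynomial ℕ ℚ) :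
    (Function.support fun j : ℕ => ((m : ℚ) * (j : ℚ)) • (X (m + j) * pderiv j f))
      ⊆ (f.vars : Set ℕ) := by
  intro j hj
  by_contra hjT
  have hz : pderiv j f = 0 := pderiv_eq_zero_of_notMem_vars (by exact_mod_cast hjT)
  simp [Function.mem_support, hz] at hj

lemma comm_aux (m : ℕ) (f : MvPolynomial ℕ ℚ) :
    Delta' (X m * f) - X m * Delta' f
      = ∑ᶠ j : ℕ, ((m : ℚ) * (j : ℚ)) • (X (m + j) * pderiv j f) := by
  classical
  set T : Finset ℕ := insert m f.vars with hTdef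
  have hmT : m ∈ T := Finset.mem_insert_self m f.vars
  have hf : f.vars ⊆ T := Finset.subset_insert m f.vars
  have hmf : (X m * f).vars ⊆ T := by
    refine (vars_mul _ _).trans ?_
    rw [vars_X]
    intro x hx
    rcases Finset.mem_union.1 hx with h | h
    · simp only [Finset.mem_singleton] at h; simpa [h] using hmT
    · exact hf h
  rw [Delta'_eq_sum (X m * f) T hmf, Delta'_eq_sum f T hf]
  rw [mul_smul_comm, ← smul_sub]
  simp only [Finset.mul_sum]
  have hXterm : ∀ i j : ℕ,
      X m * (((i : ℚ) * (j : ℚ)) • (X (i + j) * pderiv i (pderiv j f)))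
        = ((i : ℚ) * (j : ℚ)) • (X (i + j) * (X m * pderiv i (pderiv j f))) := by
    intro i j; rw [mul_smul_comm]; ring_nf
  have hDD : ∀ i j : ℕ, pderiv i (pderiv j (X m * f))
      = pderiv j (X m) * pderiv i f + pderiv i (X m) * pderiv j f
        + X m * pderiv i (pderiv j f) := by
    intro i j
    rw [pderiv_mul, map_add, pderiv_mul, pderiv_mul]
    have : pderiv i (pderiv j (X m : MvPolynomial ℕ ℚ)) = 0 := by
      by_cases h : j = m
      · subst h; rw [pderiv_X_self]; exact pderiv_one
      · rw [pderiv_X_of_ne (Ne.symm h)]; exact map_zero _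
    rw [this]
    ring
  have hmain : (∑ i ∈ T, ∑ j ∈ T,
        ((i : ℚ) * (j : ℚ)) • (X (i + j) * pderiv i (pderiv j (X m * f))))
      - ∑ i ∈ T, ∑ j ∈ T, X m * (((i : ℚ) * (j : ℚ)) • (X (i + j) * pderiv i (pderiv j f)))
      = ∑ i ∈ T, ∑ j ∈ T, ((i : ℚ) * (j : ℚ)) •
          (X (i + j) * (pderiv j (X m) * pderiv i f + pderiv i (X m) * pderiv j f)) := by
    rw [← Finset.sum_sub_distrib]
    refine Finset.sum_congr rfl fun i _ => ?_
    rw [← Finset.sum_sub_distrib]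
    refine Finset.sum_congr rfl fun j _ => ?_
    rw [hXterm, hDD, ← smul_sub]
    congr 1
    ring
  rw [hmain]
  have hsplit : ∀ i j : ℕ, ((i : ℚ) * (j : ℚ)) •
      (X (i + j) * (pderiv j (X m) * pderiv i f + pderiv i (X m) * pderiv j f))
      = ((i : ℚ) * (j : ℚ)) • (X (i + j) * (pderiv j (X m) * pderiv i f))
        + ((i : ℚ) * (j : ℚ)) • (X (i + j) * (pderiv i (X m) * pderiv j f)) := by
    intro i j; rw [← smul_add]; ring_nf
  simp_rw [hsplit, Finset.sum_add_distrib]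
  have hA : (∑ i ∈ T, ∑ j ∈ T,
      ((i : ℚ) * (j : ℚ)) • (X (i + j) * (pderiv j (X m) * pderiv i f)))
      = ∑ i ∈ T, ((m : ℚ) * (i : ℚ)) • (X (m + i) * pderiv i f) := by
    refine Finset.sum_congr rfl fun i _ => ?_
    rw [Finset.sum_eq_single_of_mem m hmT]
    · rw [pderiv_X_self, one_mul]
      rw [mul_comm (i : ℚ) (m : ℚ), add_comm i m]
    · intro j _ hj
      rw [pderiv_X_of_ne (Ne.symm hj)]
      simp
  have hB : (∑ i ∈ T, ∑ j ∈ T,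
      ((i : ℚ) * (j : ℚ)) • (X (i + j) * (pderiv i (X m) * pderiv j f)))
      = ∑ j ∈ T, ((m : ℚ) * (j : ℚ)) • (X (m + j) * pderiv j f) := by
    rw [Finset.sum_eq_single_of_mem m hmT]
    · refine Finset.sum_congr rfl fun j _ => ?_
      rw [pderiv_X_self, one_mul]
    · intro i _ hi
      apply Finset.sum_eq_zero
      intro j _
      rw [pderiv_X_of_ne (Ne.symm hi)]
      simp
  rw [hA, hB, ← two_smul ℚ, smul_smul]
  norm_num
  rw [finsum_eq_sum_of_support_subset _
    ((support_term_subset m f).trans (by exact_mod_cast hf))]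

lemma Delta'_smul (c : ℚ) (g : MvPolynomial ℕ ℚ) : Delta' (c • g) = c • Delta' g := by
  classical
  have hg : (c • g).vars ⊆ insert 0 g.vars := by
    by_cases hc : c = 0
    · simp [hc]
    · rw [MvPolynomial.smul_eq_C_mul]
      refine (vars_mul _ _).trans ?_
      intro x hx
      rcases Finset.mem_union.1 hx with h | h
      · simp [vars_C] at h
      · exact Finset.mem_insert_of_mem h
  rw [Delta'_eq_sum (c • g) (insert 0 g.vars) hg,
    Delta'_eq_sum g (insert 0 g.vars) (Finset.subset_insert _ _)]
  rw [smul_comm]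
  congr 1
  rw [Finset.smul_sum]
  refine Finset.sum_congr rfl fun i _ => ?_
  rw [Finset.smul_sum]
  refine Finset.sum_congr rfl fun j _ => ?_
  rw [Derivation.map_smul, Derivation.map_smul, mul_smul_comm, smul_comm]

lemma E_apply (f : MvPolynomial ℕ ℚ) :
    opComm Delta' (mulP 1) f = ∑ᶠ j : ℕ, ((j : ℚ)) • (X (1 + j) * pderiv j f) := by
  have := comm_aux 1 f
  simp only [Nat.cast_one, one_mul] at this
  simpa [opComm, mulP] using this

lemma E_smul (c : ℚ) (f : MvPolynomial ℕ ℚ) :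
    opComm Delta' (mulP 1) (c • f) = c • opComm Delta' (mulP 1) f := by
  simp only [opComm, mulP, mul_smul_comm, Delta'_smul, smul_sub]

lemma E_comm_mulP (m : ℕ) (f : MvPolynomial ℕ ℚ) :
    opComm Delta' (mulP 1) (X m * f) - X m * opComm Delta' (mulP 1) f
      = (m : ℚ) • (X (m + 1) * f) := by
  classical
  rw [E_apply, E_apply]
  set T : Finset ℕ := insert m f.vars with hTdef
  have hmT : m ∈ T := Finset.mem_insert_self m f.vars
  have hf : (f.vars : Set ℕ) ⊆ (T : Set ℕ) := by
    exact_mod_cast Finset.subset_insert m f.vars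
  have hmf : ((X m * f).vars : Set ℕ) ⊆ (T : Set ℕ) := by
    refine Finset.coe_subset.2 ((vars_mul _ _).trans ?_)
    rw [vars_X]
    intro x hx
    rcases Finset.mem_union.1 hx with h | h
    · simp only [Finset.mem_singleton] at h; simpa [h] using hmT
    · exact Finset.mem_insert_of_mem h
  have h1 : (Function.support fun j : ℕ => ((j : ℚ)) • (X (1 + j) * pderiv j (X m * f)))
      ⊆ (T : Set ℕ) := by
    refine subset_trans ?_ hmf
    have := support_term_subset 1 (X m * f)
    simp only [Nat.cast_one, one_mul] at this
    exact this
  have h2 : (Function.support fun j : ℕ => ((j : ℚ)) • (X (1 + j) * pderiv j f))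
      ⊆ (T : Set ℕ) := by
    refine subset_trans ?_ hf
    have := support_term_subset 1 f
    simp only [Nat.cast_one, one_mul] at this
    exact this
  rw [finsum_eq_sum_of_support_subset _ h1, finsum_eq_sum_of_support_subset _ h2,
    Finset.mul_sum, ← Finset.sum_sub_distrib]
  have hterm : ∀ j ∈ T, ((j : ℚ)) • (X (1 + j) * pderiv j (X m * f))
      - X m * (((j : ℚ)) • (X (1 + j) * pderiv j f))
      = ((j : ℚ)) • (X (1 + j) * (pderiv j (X m) * f)) := by
    intro j _
    rw [pderiv_mul, mul_smul_comm, ← smul_sub]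
    congr 1
    ring
  rw [Finset.sum_congr rfl hterm, Finset.sum_eq_single_of_mem m hmT]
  · rw [pderiv_X_self, one_mul, add_comm 1 m]
  · intro j _ hj
    rw [pderiv_X_of_ne (Ne.symm hj)]
    simp

lemma key_iter (k : ℕ) :
    (opComm (opComm Delta' (mulP 1)))^[k] (mulP 1) =
      fun f => ((k.factorial : ℚ)) • (X (k + 1) * f) := by
  induction k with
  | zero => funext f; simp [mulP]
  | succ k ih =>
    rw [Function.iterate_succ_apply', ih]
    funext f
    show opComm Delta' (mulP 1) ((k.factorial : ℚ) • (X (k + 1) * f))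
        - (k.factorial : ℚ) • (X (k + 1) * opComm Delta' (mulP 1) f) = _
    rw [E_smul, ← smul_sub, E_comm_mulP (k + 1) f, smul_smul]
    rw [Nat.factorial_succ]
    push_cast
    ring_nf

/-- For every `n ≥ 1`, applying `ad([Δ′, p_1])` iterated `n - 1` times to the
multiplication operator `p_1` yields `(n-1)!` times the multiplication
operator `p_n`: `ad([Δ′, p_1])^{n-1}(p_1) = (n-1)! p_n` as operators on `P`. -/
theorem ad_iter_commutator (n : ℕ) (hn : 1 ≤ n) :
    (opComm (opComm Delta' (mulP 1)))^[n - 1] (mulP 1) =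
      fun f => ((n - 1).factorial : ℚ) • (X n * f) := by
  obtain ⟨k, rfl⟩ := Nat.exists_eq_add_of_le hn
  simpa [Nat.add_sub_cancel_left, add_comm 1 k] using key_iter k

end
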